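/- arXiv:2404.03065 — 3 statements merged into one kernel-verified Lean document; each statement's English description precedes it below -/
import Mathlib

section
/- Non-degeneracy of [·,·]_⊛: if t ≠ 0 and p_t is a scaled hypercomplex matrix with Tr(q_t^⊛ p_t) = 0 for all scaled hypercomplex matrices q_t, then p_t = 0. -/
open Matrix

noncomputable section

/-- The scaled hypercomplex matrix `q_t = [[a, tb],[conj b, conj a]]`. -/
def qt (t : ℝ) (a b : ℂ) : Matrix (Fin 2) (Fin 2) ℂ :=
  !![a, (t : ℂ) * b; (starRingEnd ℂ) b, (starRingEnd ℂ) a]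

/-- The ⊛-adjoint `q_t^⊛ = [[conj a, -tb],[-conj b, a]]`. -/
def circAdj (t : ℝ) (a b : ℂ) : Matrix (Fin 2) (Fin 2) ℂ :=
  !![(starRingEnd ℂ) a, -((t : ℂ) * b); -((starRingEnd ℂ) b), a]

/-- Non-degeneracy of the ⊛-form for `t ≠ 0`. -/
theorem stmt12 (t : ℝ) (ht : t ≠ 0) (c d : ℂ)
    (h : ∀ a b : ℂ, (circAdj t a b * qt t c d).trace = 0) :
    qt t c d = 0 := by
  have h1 := h c 0
  have h2 := h 0 d
  simp [qt, circAdj, Matrix.trace_fin_two, Matrix.mul_apply, Fin.sum_univ_two,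
    mul_comm] at h1 h2
  have hd : d = 0 := by tauto
  rw [h1, hd]
  ext i j
  fin_cases i <;> fin_cases j <;> simp [qt]
end
end

section
/- Non-degeneracy of [·,·]_{[*]}: if t ≠ 0 and q_t is a scaled hypercomplex matrix such that Tr(p_t^{[*]} q_t) = 0 for all scaled hypercomplex matrices p_t, then q_t = 0. Moreover the form is symmetric: Tr(p_t^{[*]} q_t) = Tr(q_t^{[*]} p_t) = 2 Re(ac + t·conj(b)·conj(d)) where q_t ↔ (a,b), p_t ↔ (c,d). -/
open Matrix

noncomputable section

/-- The `[*]`-adjoint `q_t^{[*]} = [[a, t·conj b],[b, conj a]]`. -/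
def bstar (t : ℝ) (a b : ℂ) : Matrix (Fin 2) (Fin 2) ℂ :=
  !![a, (t : ℂ) * (starRingEnd ℂ) b; b, (starRingEnd ℂ) a]

lemma tr_eq (t : ℝ) (a b c d : ℂ) :
    (bstar t c d * qt t a b).trace =
      (a * c + (t : ℂ) * (starRingEnd ℂ) b * (starRingEnd ℂ) d) +
      (starRingEnd ℂ) (a * c + (t : ℂ) * (starRingEnd ℂ) b * (starRingEnd ℂ) d) := by
  simp [bstar, qt, Matrix.trace_fin_two, Matrix.mul_apply, Fin.sum_univ_two, _root_.map_mul,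
    map_add, Complex.conj_ofReal]
  ring

/-- Non-degeneracy, symmetry and explicit value of the `[*]`-form for `t ≠ 0`. -/
theorem stmt13 (t : ℝ) (ht : t ≠ 0) (a b : ℂ) :
    ((∀ c d : ℂ, (bstar t c d * qt t a b).trace = 0) → qt t a b = 0) ∧
    (∀ c d : ℂ,
      (bstar t c d * qt t a b).trace = (bstar t a b * qt t c d).trace ∧
      (bstar t c d * qt t a b).trace =
        ((2 * (a * c + (t : ℂ) * (starRingEnd ℂ) b * (starRingEnd ℂ) d).re : ℝ) : ℂ)) := by
  constructor
  · intro h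
    have ha := h ((starRingEnd ℂ) a) 0
    rw [tr_eq] at ha
    simp [Complex.mul_conj] at ha
    have hb := h 0 ((starRingEnd ℂ) b)
    rw [tr_eq] at hb
    simp [Complex.conj_conj, Complex.conj_ofReal] at hb
    have hb2 : ((2 * t : ℝ) : ℂ) * (b * (starRingEnd ℂ) b) = 0 := by
      push_cast
      linear_combination hb
    have hbz : b = 0 := by
      rcases mul_eq_zero.mp hb2 with h1 | h1
      · exact absurd (by exact_mod_cast h1) (by simpa using ht)
      · rcases mul_eq_zero.mp h1 with h2 | h2
        · exact h2
        · simpa using h2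
    subst ha; subst hbz
    ext i j
    fin_cases i <;> fin_cases j <;> simp [qt]
  · intro c d
    constructor
    · rw [tr_eq, tr_eq]
      simp [_root_.map_mul, map_add, Complex.conj_ofReal]
      ring
    · rw [tr_eq, Complex.add_conj]
end
end

section
/- The form [q_t, p_t]_{[*]} = Tr(p_t^{[*]} q_t) on the 4-dimensional real space of scaled hypercomplex matrices has signature (2,2) for every t ≠ 0. -/
open Matrix

noncomputable section

def Amap : (ℂ × ℂ) →ₗ[ℝ] ℝ := Complex.reLm.comp (LinearMap.fst ℝ ℂ ℂ)
def Bmap : (ℂ × ℂ) →ₗ[ℝ] ℝ := Complex.imLm.comp (LinearMap.fst ℝ ℂ ℂ)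
def Cmap : (ℂ × ℂ) →ₗ[ℝ] ℝ := Complex.reLm.comp (LinearMap.snd ℝ ℂ ℂ)
def Dmap : (ℂ × ℂ) →ₗ[ℝ] ℝ := Complex.imLm.comp (LinearMap.snd ℝ ℂ ℂ)

lemma trace_re (t : ℝ) (a b : ℂ) :
    ((bstar t a b * qt t a b).trace).re =
      2 * (a.re ^ 2 - a.im ^ 2) + 2 * t * (b.re ^ 2 - b.im ^ 2) := by
  simp [bstar, qt, Matrix.trace_fin_two, Matrix.mul_apply, Fin.sum_univ_two,
    Complex.add_re, Complex.mul_re, Complex.ofReal_re, Complex.ofReal_im]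
  ring

lemma indepP (r0 r1 r2 r3 : ℝ) (h0 : r0 ≠ 0) (h1 : r1 ≠ 0) (h2 : r2 ≠ 0) (h3 : r3 ≠ 0) :
    LinearIndependent ℝ ![r0 • Amap, r1 • Cmap, r2 • Bmap, r3 • Dmap] := by
  rw [Fintype.linearIndependent_iff]
  intro g hg
  have e1 := LinearMap.congr_fun hg (1, 0)
  have e2 := LinearMap.congr_fun hg (Complex.I, 0)
  have e3 := LinearMap.congr_fun hg (0, 1)
  have e4 := LinearMap.congr_fun hg (0, Complex.I)
  simp [Fin.sum_univ_four, Amap, Bmap, Cmap, Dmap, LinearMap.sum_apply,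
    Complex.I_re, Complex.I_im, h0, h1, h2, h3] at e1 e2 e3 e4
  intro i
  fin_cases i <;> simp_all

lemma indepN (r0 r1 r2 r3 : ℝ) (h0 : r0 ≠ 0) (h1 : r1 ≠ 0) (h2 : r2 ≠ 0) (h3 : r3 ≠ 0) :
    LinearIndependent ℝ ![r0 • Amap, r1 • Dmap, r2 • Bmap, r3 • Cmap] := by
  rw [Fintype.linearIndependent_iff]
  intro g hg
  have e1 := LinearMap.congr_fun hg (1, 0)
  have e2 := LinearMap.congr_fun hg (Complex.I, 0)
  have e3 := LinearMap.congr_fun hg (0, 1)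
  have e4 := LinearMap.congr_fun hg (0, Complex.I)
  simp [Fin.sum_univ_four, Amap, Bmap, Cmap, Dmap, LinearMap.sum_apply,
    Complex.I_re, Complex.I_im, h0, h1, h2, h3] at e1 e2 e3 e4
  intro i
  fin_cases i <;> simp_all

/-- For every `t ≠ 0`, the `[*]`-form `Tr(q_t^{[*]} q_t)` on the real 4-dimensional space of
scaled hypercomplex matrices (parameters `(a, b) ∈ ℂ × ℂ`) has signature `(2,2)`: it is a
difference of two sums of two squares of linearly independent real linear functionals. -/
theorem stmt14 (t : ℝ) (ht : t ≠ 0) :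
    ∃ f g h k : (ℂ × ℂ) →ₗ[ℝ] ℝ,
      LinearIndependent ℝ ![f, g, h, k] ∧
      ∀ a b : ℂ, ((bstar t a b * qt t a b).trace).re =
        f (a, b) ^ 2 + g (a, b) ^ 2 - h (a, b) ^ 2 - k (a, b) ^ 2 := by
  have hc2 : (Real.sqrt 2) ^ 2 = 2 := Real.sq_sqrt (by norm_num)
  have hc0 : Real.sqrt 2 ≠ 0 := by positivity
  rcases ht.lt_or_gt with hneg | hpos
  · -- t < 0
    have hd2 : (Real.sqrt (-2 * t)) ^ 2 = -2 * t := Real.sq_sqrt (by nlinarith)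
    have hd0 : Real.sqrt (-2 * t) ≠ 0 := by
      refine (Real.sqrt_ne_zero (by nlinarith)).mpr ?_
      nlinarith
    refine ⟨Real.sqrt 2 • Amap, Real.sqrt (-2 * t) • Dmap,
      Real.sqrt 2 • Bmap, Real.sqrt (-2 * t) • Cmap,
      indepN _ _ _ _ hc0 hd0 hc0 hd0, fun a b => ?_⟩
    rw [trace_re]
    simp only [LinearMap.smul_apply, smul_eq_mul, Amap, Bmap, Cmap, Dmap,
      LinearMap.comp_apply, LinearMap.fst_apply, LinearMap.snd_apply,
      Complex.reLm_coe, Complex.imLm_coe]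
    nlinarith [hc2, hd2]
  · -- t > 0
    have hd2 : (Real.sqrt (2 * t)) ^ 2 = 2 * t := Real.sq_sqrt (by nlinarith)
    have hd0 : Real.sqrt (2 * t) ≠ 0 := by
      refine (Real.sqrt_ne_zero (by nlinarith)).mpr ?_
      nlinarith
    refine ⟨Real.sqrt 2 • Amap, Real.sqrt (2 * t) • Cmap,
      Real.sqrt 2 • Bmap, Real.sqrt (2 * t) • Dmap,
      indepP _ _ _ _ hc0 hd0 hc0 hd0, fun a b => ?_⟩
    rw [trace_re]
    simp only [LinearMap.smul_apply, smul_eq_mul, Amap, Bmap, Cmap, Dmap,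
      LinearMap.comp_apply, LinearMap.fst_apply, LinearMap.snd_apply,
      Complex.reLm_coe, Complex.imLm_coe]
    nlinarith [hc2, hd2]
end
end
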